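/- (Chung–Feller) Let n ≥ 0 and let l be an integer with 0 ≤ l ≤ n. The number of sequences of n A's and n B's for which there are exactly l indices i ∈ {1, …, n} such that the i-th A (in left-to-right order) occurs at an earlier position than the i-th B equals (1/(n+1)) · binom(2n, n); equivalently, for a uniformly random such sequence the probability of exactly l such indices is 1/(n+1). -/

import Mathlib

set_option linter.unusedSectionVars false
set_option linter.unusedVariables false
set_option linter.unreachableTactic false
set_option linter.unusedTactic false
set_option maxHeartbeats 1000000

/-- The (0-based) positions of the occurrences of `x` in the list `w`, in
increasing order. -/
def occPositions (w : List Bool) (x : Bool) : List ℕ :=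
  (List.range w.length).filter (fun m => w.getD m (!x) == x)

/-- count of `b`s in `take t`. -/
def Hc (b : Bool) (v : List Bool) (t : ℕ) : ℕ := (v.take t).count b

lemma count_true_add_count_false (v : List Bool) : v.count true + v.count false = v.length := by
  induction v with
  | nil => simp
  | cons a l ih => cases a <;> simp [List.count_cons] <;> omega

lemma Hc_succ (b : Bool) (v : List Bool) {t : ℕ} (ht : t < v.length) :
    Hc b v (t + 1) = Hc b v t + if v.getD t (!b) = b then 1 else 0 := by
  unfold Hc
  rw [List.take_succ, List.getElem?_eq_getElem ht, List.count_append]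
  rw [List.getD_eq_getElem _ _ ht]
  rcases Bool.eq_false_or_eq_true (v[t] == b) with h | h <;> simp_all [List.count_singleton']

lemma Hc_length (b : Bool) (v : List Bool) {t : ℕ} (ht : v.length ≤ t) :
    Hc b v t = v.count b := by
  unfold Hc; rw [List.take_of_length_le ht]

lemma Hc_add (b : Bool) (v : List Bool) (s t : ℕ) :
    Hc b v (s + t) = Hc b v s + (List.count b ((v.drop s).take t)) := by
  unfold Hc; rw [List.take_add, List.count_append]

lemma Hc_le (b : Bool) (v : List Bool) (t : ℕ) : Hc b v t ≤ v.count b :=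
  (v.take_sublist t).count_le b

lemma getD_bool (w : List Bool) {p : ℕ} (h : p < w.length) (d d' : Bool) :
    w.getD p d = w.getD p d' := by
  rw [List.getD_eq_getElem _ _ h, List.getD_eq_getElem _ _ h]

lemma F3L (b : Bool) (v : List Bool) : ∀ {t : ℕ}, t ≤ v.length →
    ((List.range t).filter (fun m => v.getD m (!b) == b)).length = Hc b v t := by
  intro t
  induction t with
  | zero => simp [Hc]
  | succ t ih =>
    intro ht
    rw [List.range_succ, List.filter_append, List.length_append, ih (by omega),
      Hc_succ b v (by omega)]
    rcases Bool.eq_false_or_eq_true (v.getD t (!b) == b) with h | h <;> simp_all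

lemma occ_length (w : List Bool) (x : Bool) : (occPositions w x).length = w.count x := by
  rw [occPositions, F3L x w le_rfl, Hc_length x w le_rfl]

lemma occ_getD_lt_iff (w : List Bool) (x : Bool) {j t : ℕ} (hj : j < w.count x)
    (ht : t ≤ w.length) : (occPositions w x).getD j 0 < t ↔ j < Hc x w t := by
  set A := (List.range t).filter (fun m => w.getD m (!x) == x) with hA
  set B := ((List.range (w.length - t)).map (fun m => t + m)).filter
      (fun m => w.getD m (!x) == x) with hB
  have hdecomp : occPositions w x = A ++ B := by
    have h1 : t + (w.length - t) = w.length := by omega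
    rw [occPositions, ← h1, List.range_add, List.filter_append]
  have hlenA : A.length = Hc x w t := F3L x w ht
  have hjocc : j < (occPositions w x).length := by rwa [occ_length]
  have hgetD : (occPositions w x).getD j 0 = (occPositions w x)[j] :=
    List.getD_eq_getElem _ _ hjocc
  constructor
  · intro hlt
    by_contra h
    push_neg at h
    have hjA : A.length ≤ j := by omega
    have hlenB : j - A.length < B.length := by
      have := hjocc; rw [hdecomp, List.length_append] at this; omega
    have hval : (occPositions w x).getD j 0 = B.getD (j - A.length) 0 := by
      rw [hdecomp]; exact List.getD_append_right _ _ _ _ hjA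
    rw [hB] at hval
    have hBmem : B.getD (j - A.length) 0 ∈ B := by
      rw [List.getD_eq_getElem _ _ hlenB]; exact List.getElem_mem _
    rw [hB] at hBmem
    rw [List.mem_filter] at hBmem
    obtain ⟨hmem1, -⟩ := hBmem
    rw [List.mem_map] at hmem1
    obtain ⟨m, -, hm⟩ := hmem1
    omega
  · intro hlt
    have hjA : j < A.length := by omega
    have hval : (occPositions w x).getD j 0 = A.getD j 0 := by
      rw [hdecomp]; exact List.getD_append _ _ _ _ hjA
    rw [hA] at hval
    have hAmem : A.getD j 0 ∈ A := by
      rw [List.getD_eq_getElem _ _ hjA]; exact List.getElem_mem _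
    rw [hA] at hAmem
    rw [List.mem_filter] at hAmem
    obtain ⟨hmem1, -⟩ := hAmem
    rw [List.mem_range] at hmem1
    omega

lemma occ_pos_spec (w : List Bool) (x : Bool) {j : ℕ} (hj : j < w.count x) :
    (occPositions w x).getD j 0 < w.length ∧
      w.getD ((occPositions w x).getD j 0) (!x) = x := by
  have hjocc : j < (occPositions w x).length := by rwa [occ_length]
  have hval : (occPositions w x).getD j 0 = (occPositions w x)[j] :=
    List.getD_eq_getElem _ _ hjocc
  have hmem : (occPositions w x).getD j 0
      ∈ (List.range w.length).filter (fun m => w.getD m (!x) == x) := by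
    rw [hval]; exact List.getElem_mem _
  rw [List.mem_filter, List.mem_range] at hmem
  refine ⟨hmem.1, ?_⟩
  have := hmem.2
  rwa [beq_iff_eq] at this

lemma Hc_occ (w : List Bool) (x : Bool) {j : ℕ} (hj : j < w.count x) :
    Hc x w ((occPositions w x).getD j 0) = j := by
  obtain ⟨hlt, hx⟩ := occ_pos_spec w x hj
  have h1 := occ_getD_lt_iff w x hj (le_of_lt hlt)
  have h2 := occ_getD_lt_iff w x hj (t := (occPositions w x).getD j 0 + 1) (by omega)
  rw [Hc_succ x w hlt, if_pos hx] at h2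
  simp only [lt_irrefl, false_iff, not_lt] at h1
  have := h2.mp (by omega)
  omega

lemma occ_of_pos (w : List Bool) (x : Bool) {p : ℕ} (hp : p < w.length)
    (hx : w.getD p (!x) = x) :
    Hc x w p < w.count x ∧ (occPositions w x).getD (Hc x w p) 0 = p := by
  have hsucc : Hc x w (p + 1) = Hc x w p + 1 := by rw [Hc_succ x w hp, if_pos hx]
  have hle : Hc x w (p + 1) ≤ w.count x := Hc_le x w (p + 1)
  have hj : Hc x w p < w.count x := by omega
  have h1 := occ_getD_lt_iff w x hj (le_of_lt hp)
  have h2 := occ_getD_lt_iff w x hj (t := p + 1) (by omega)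
  simp only [lt_irrefl, iff_false, not_lt] at h1
  have := h2.mpr (by omega)
  omega

lemma F3F (b : Bool) (v : List Bool) : ∀ {t : ℕ}, t ≤ v.length →
    ((Finset.range t).filter (fun m => v.getD m (!b) = b)).card = Hc b v t := by
  intro t
  induction t with
  | zero => simp [Hc]
  | succ t ih =>
    intro ht
    rw [Finset.range_add_one, Finset.filter_insert]
    by_cases h : v.getD t (!b) = b
    · rw [if_pos h, Finset.card_insert_of_notMem (by simp), ih (by omega),
        Hc_succ b v (by omega), if_pos h]
    · rw [if_neg h, ih (by omega), Hc_succ b v (by omega), if_neg h]; omega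

def Ew (v : List Bool) (q : ℕ) : ℤ := (Hc true v (q + 1) : ℤ) - (Hc false v (q + 1) : ℤ)

/-- number of B-steps ending at nonnegative height -/
def stat (w : List Bool) : ℕ :=
  ((Finset.range w.length).filter (fun p => w.getD p true = false ∧ 0 ≤ Ew w p)).card

lemma Hc_succ_false {w : List Bool} {p : ℕ} (hp : p < w.length)
    (hfalse : w.getD p true = false) :
    Hc false w (p + 1) = Hc false w p + 1 ∧ Hc true w (p + 1) = Hc true w p := by
  have h1 : w.getD p (!false) = false := hfalse
  have h2 : ¬ (w.getD p (!true) = true) := by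
    have hx : w.getD p (!true) = false := by
      rw [getD_bool w hp (!true) true]; exact hfalse
    intro hcon
    rw [hcon] at hx
    exact absurd hx (by simp)
  rw [Hc_succ false w hp, if_pos h1, Hc_succ true w hp, if_neg h2]
  omega

lemma stat_eq {n : ℕ} {w : List Bool} (hlen : w.length = 2 * n) (hcnt : w.count true = n) :
    ((Finset.range n).filter (fun i =>
      (occPositions w true).getD i 0 < (occPositions w false).getD i 0)).card = stat w := by
  have hcf : w.count false = n := by have := count_true_add_count_false w; omega
  rw [stat]
  apply Finset.card_bij' (fun i _ => (occPositions w false).getD i 0)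
      (fun p _ => Hc false w p)
  · -- hi
    intro i hi
    rw [Finset.mem_filter, Finset.mem_range] at hi
    obtain ⟨hin, hab⟩ := hi
    have hin' : i < w.count false := by omega
    obtain ⟨hblt, hbfalse⟩ := occ_pos_spec w false hin'
    set p := (occPositions w false).getD i 0 with hp
    have hbfalse' : w.getD p true = false := hbfalse
    have hHcf : Hc false w p = i := Hc_occ w false hin'
    have hHct : i < Hc true w p := by
      have := (occ_getD_lt_iff w true (by omega : i < w.count true) (le_of_lt hblt)).mp hab
      omega
    obtain ⟨hf1, hf2⟩ := Hc_succ_false hblt hbfalse'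
    rw [Finset.mem_filter, Finset.mem_range]
    refine ⟨by omega, hbfalse', ?_⟩
    rw [Ew]
    omega
  · -- hj
    intro p hp
    rw [Finset.mem_filter, Finset.mem_range] at hp
    obtain ⟨hplt, hpfalse, hpos⟩ := hp
    have hpfalse' : w.getD p (!false) = false := hpfalse
    obtain ⟨hjlt, hocc⟩ := occ_of_pos w false hplt hpfalse'
    obtain ⟨hf1, hf2⟩ := Hc_succ_false hplt hpfalse
    rw [Finset.mem_filter, Finset.mem_range]
    refine ⟨by omega, ?_⟩
    rw [hocc]
    rw [occ_getD_lt_iff w true (by omega : Hc false w p < w.count true) (le_of_lt hplt)]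
    rw [Ew] at hpos
    omega
  · intro i hi
    rw [Finset.mem_filter, Finset.mem_range] at hi
    exact Hc_occ w false (by omega)
  · intro p hp
    rw [Finset.mem_filter, Finset.mem_range] at hp
    have hpfalse' : w.getD p (!false) = false := hp.2.1
    exact (occ_of_pos w false hp.1 hpfalse').2

def rotW (v : List Bool) (q : ℕ) : List Bool := v.drop (q + 1) ++ v.take q

section core
variable {n q : ℕ} {v : List Bool}
  (hv : v.length = 2 * n + 1) (hcnt : v.count true = n)
  (hq : q < v.length) (hqf : v.getD q true = false)

include hv

lemma drop_len : (v.drop (q + 1)).length = 2 * n - q := by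
  rw [List.length_drop, hv]
  omega

include hq in
lemma take_len : (v.take q).length = q := by
  rw [List.length_take]; omega

include hq in
lemma rotW_length : (rotW v q).length = 2 * n := by
  rw [rotW, List.length_append, drop_len hv, take_len hv hq]
  rw [hv] at hq
  omega

include hcnt in
lemma count_false_v : v.count false = n + 1 := by
  have := count_true_add_count_false v
  omega

include hq hqf in
lemma count_rotW (b : Bool) : (rotW v q).count b + (if b = false then 1 else 0) = v.count b := by
  have hsplit : v.take q ++ v.drop q = v := List.take_append_drop q v
  have hdrop : v.drop q = v[q] :: v.drop (q + 1) := List.drop_eq_getElem_cons hq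
  have hvq : v[q] = false := by
    have := List.getD_eq_getElem v true hq
    rw [hqf] at this
    exact this.symm
  have hcount : v.count b = (v.take q).count b + ((v.drop (q+1)).count b
      + if b = false then 1 else 0) := by
    conv_lhs => rw [← hsplit]
    rw [List.count_append, hdrop, List.count_cons, hvq]
    rcases b with _ | _ <;> simp
  rw [rotW, List.count_append]
  omega

include hq in
lemma K1 (b : Bool) (t : ℕ) (ht : t ≤ 2 * n - q) :
    Hc b v (q + 1 + t) = Hc b v (q + 1) + Hc b (rotW v q) t := by
  rw [Hc_add]
  congr 1
  show _ = (List.take t (v.drop (q+1) ++ v.take q)).count b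
  rw [List.take_append]
  have h0 : t - (v.drop (q+1)).length = 0 := by rw [drop_len hv]; omega
  rw [h0, List.take_zero, List.append_nil]

include hq in
lemma K2 (b : Bool) (t : ℕ) (h1 : 2 * n - q ≤ t) (h2 : t ≤ 2 * n) :
    Hc b (rotW v q) t + Hc b v (q + 1) = v.count b + Hc b v (t - (2 * n - q)) := by
  have hq' : q ≤ 2 * n := by rw [hv] at hq; omega
  have hylen : (v.drop (q+1)).length = 2 * n - q := drop_len hv
  have htake : List.take t (rotW v q) = v.drop (q+1) ++ List.take (t - (2*n - q)) (v.take q) := by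
    rw [rotW, List.take_append, List.take_of_length_le (by omega), hylen]
  have htt : List.take (t - (2*n - q)) (v.take q) = List.take (t - (2*n - q)) v := by
    rw [List.take_take, min_eq_left (by omega)]
  have hcnt2 : v.count b = Hc b v (q+1) + (v.drop (q+1)).count b := by
    conv_lhs => rw [← List.take_append_drop (q+1) v]
    rw [List.count_append]
    rfl
  show (List.take t (rotW v q)).count b + _ = _
  rw [htake, List.count_append, htt]
  simp only [Hc] at hcnt2 ⊢
  omega

include hq in
lemma E1 (p : ℕ) (hp : p < 2 * n - q) : Ew (rotW v q) p = Ew v (q + 1 + p) - Ew v q := by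
  have h1 := K1 hv hq true (p+1) (by omega)
  have h2 := K1 hv hq false (p+1) (by omega)
  rw [show q + 1 + (p + 1) = (q + 1 + p) + 1 by omega] at h1 h2
  simp only [Ew]
  omega

include hq hcnt in
lemma E2 (p : ℕ) (h1 : 2 * n - q ≤ p) (h2 : p < 2 * n) :
    Ew (rotW v q) p = Ew v (p - (2 * n - q)) - Ew v q - 1 := by
  have ht := K2 hv hq true (p+1) (by omega) (by omega)
  have hf := K2 hv hq false (p+1) (by omega) (by omega)
  rw [show p + 1 - (2*n - q) = (p - (2*n - q)) + 1 by omega] at ht hf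
  have hcf : v.count false = n + 1 := count_false_v hv hcnt
  simp only [Ew]
  omega

include hq in
lemma G1 (p : ℕ) (d : Bool) (hp : p < 2 * n - q) :
    (rotW v q).getD p d = v.getD (q + 1 + p) d := by
  have hylen : (v.drop (q+1)).length = 2 * n - q := drop_len hv
  have hp1 : p < (rotW v q).length := by rw [rotW_length hv hq]; omega
  have hp2 : q + 1 + p < v.length := by rw [hv]; omega
  rw [List.getD_eq_getElem _ _ hp1, List.getD_eq_getElem _ _ hp2]
  show (v.drop (q+1) ++ v.take q)[p]'(by rwa [rotW] at hp1) = _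
  rw [List.getElem_append_left (by omega)]
  rw [List.getElem_drop]

include hq in
lemma G2 (p : ℕ) (d : Bool) (h1 : 2 * n - q ≤ p) (h2 : p < 2 * n) :
    (rotW v q).getD p d = v.getD (p - (2 * n - q)) d := by
  have hq' : q ≤ 2 * n := by rw [hv] at hq; omega
  have hylen : (v.drop (q+1)).length = 2 * n - q := drop_len hv
  have hp1 : p < (rotW v q).length := by rw [rotW_length hv hq]; omega
  have hp2 : p - (2*n - q) < v.length := by rw [hv]; omega
  rw [List.getD_eq_getElem _ _ hp1, List.getD_eq_getElem _ _ hp2]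
  show (v.drop (q+1) ++ v.take q)[p]'(by rwa [rotW] at hp1) = _
  rw [List.getElem_append_right (by omega)]
  rw [List.getElem_take]
  congr 1
  omega


def rank (v : List Bool) (q : ℕ) : ℕ :=
  ((Finset.range v.length).filter (fun p => v.getD p true = false ∧
    (Ew v q < Ew v p ∨ (Ew v p = Ew v q ∧ q < p)))).card

def phiR (n q p : ℕ) : ℕ := if q < p then p - q - 1 else p + (2 * n - q)

def psiR (n q p : ℕ) : ℕ := if p < 2 * n - q then q + 1 + p else p - (2 * n - q)

include hq in
lemma rotV_length : (rotW v q ++ [false]).length = 2 * n + 1 := by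
  rw [List.length_append, rotW_length hv hq]
  simp

include hq in
lemma EV' (p : ℕ) (hp : p < 2 * n) : Ew (rotW v q ++ [false]) p = Ew (rotW v q) p := by
  simp only [Ew, Hc]
  rw [List.take_append,
    show p + 1 - (rotW v q).length = 0 by rw [rotW_length hv hq]; omega,
    List.take_zero, List.append_nil]

include hq hcnt hqf in
lemma EVlast : Ew (rotW v q ++ [false]) (2 * n) = -1 := by
  have hlen : (rotW v q ++ [false]).length = 2*n+1 := rotV_length hv hq
  simp only [Ew]
  rw [Hc_length true _ (by omega), Hc_length false _ (by omega)]
  rw [List.count_append, List.count_append]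
  have h1 := count_rotW hv hq hqf true
  have h2 := count_rotW hv hq hqf false
  have h3 : v.count false = n + 1 := count_false_v hv hcnt
  simp at h1 h2
  simp only [List.count_singleton]
  simp only [hcnt] at h1
  rw [h3] at h2
  have e1 : (rotW v q).count true = n := by omega
  have e2 : (rotW v q).count false = n := by omega
  rw [e1, e2]
  simp

include hq in
lemma GV' (p : ℕ) (d : Bool) (hp : p < 2 * n) :
    (rotW v q ++ [false]).getD p d = (rotW v q).getD p d := by
  exact List.getD_append _ _ _ _ (by rw [rotW_length hv hq]; omega)

include hq in
lemma GVlast (d : Bool) : (rotW v q ++ [false]).getD (2 * n) d = false := by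
  rw [List.getD_append_right _ _ _ _ (by rw [rotW_length hv hq])]
  rw [rotW_length hv hq]
  simp

include hq hcnt hqf in
lemma EV2 (p : ℕ) (hp : p < 2 * n + 1) :
    Ew (rotW v q ++ [false]) (phiR n q p)
      = Ew v p - Ew v q - (if q < p then 0 else 1) := by
  have hq' : q ≤ 2 * n := by rw [hv] at hq; omega
  by_cases h : q < p
  · rw [phiR, if_pos h, if_pos h]
    rw [EV' hv hq _ (by omega), E1 hv hq _ (by omega),
      show q + 1 + (p - q - 1) = p by omega]
    ring
  · rw [phiR, if_neg h, if_neg h]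
    by_cases hpq : p = q
    · subst hpq
      rw [show p + (2*n - p) = 2*n by omega, EVlast hv hcnt hq hqf]
      ring
    · have hplt : p < q := by omega
      rw [EV' hv hq _ (by omega), E2 hv hcnt hq _ (by omega) (by omega),
        show p + (2*n - q) - (2*n - q) = p by omega]

include hq hqf in
lemma GV2 (p : ℕ) (hp : p < 2 * n + 1) :
    (rotW v q ++ [false]).getD (phiR n q p) true = v.getD p true := by
  have hq' : q ≤ 2 * n := by rw [hv] at hq; omega
  by_cases h : q < p
  · rw [phiR, if_pos h]
    rw [GV' hv hq _ _ (by omega), G1 hv hq _ _ (by omega),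
      show q + 1 + (p - q - 1) = p by omega]
  · rw [phiR, if_neg h]
    by_cases hpq : p = q
    · subst hpq
      rw [show p + (2*n - p) = 2*n by omega, GVlast hv hq, hqf]
    · have hplt : p < q := by omega
      rw [GV' hv hq _ _ (by omega), G2 hv hq _ _ (by omega) (by omega),
        show p + (2*n - q) - (2*n - q) = p by omega]

omit hv hq in
lemma psiR_phiR (hq' : q ≤ 2 * n) {p : ℕ} (hp : p < 2 * n + 1) :
    psiR n q (phiR n q p) = p := by
  simp only [phiR, psiR]; split_ifs <;> omega

omit hv hq in
lemma phiR_psiR (hq' : q ≤ 2 * n) {p : ℕ} (hp : p < 2 * n + 1) :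
    phiR n q (psiR n q p) = p := by
  simp only [phiR, psiR]; split_ifs <;> omega

include hcnt hq hqf in
lemma lemB : stat (rotW v q) = rank v q := by
  have hq' : q ≤ 2 * n := by rw [hv] at hq; omega
  rw [stat, rank, hv, rotW_length hv hq]
  symm
  apply Finset.card_bij' (fun p _ => phiR n q p) (fun p _ => psiR n q p)
  · intro p hp
    rw [Finset.mem_filter, Finset.mem_range] at hp ⊢
    obtain ⟨hplt, hpf, hgt⟩ := hp
    have hpne : p ≠ q := by
      rintro rfl
      rcases hgt with h | ⟨h1, h2⟩ <;> omega
    have hphilt : phiR n q p < 2 * n := by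
      simp only [phiR]; split_ifs <;> omega
    refine ⟨hphilt, ?_, ?_⟩
    · rw [← GV' hv hq _ _ hphilt, GV2 hv hq hqf _ (by omega), hpf]
    · rw [← EV' hv hq _ hphilt, EV2 hv hcnt hq hqf _ (by omega)]
      by_cases h : q < p <;> simp only [h, if_true, if_false] <;> omega
  · intro p hp
    rw [Finset.mem_filter, Finset.mem_range] at hp ⊢
    obtain ⟨hplt, hpf, hpos⟩ := hp
    have hpsilt : psiR n q p < 2 * n + 1 := by
      simp only [psiR]; split_ifs <;> omega
    refine ⟨hpsilt, ?_, ?_⟩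
    · by_cases h : p < 2 * n - q
      · rw [psiR, if_pos h, ← G1 hv hq _ _ h, hpf]
      · rw [psiR, if_neg h, ← G2 hv hq _ _ (by omega) hplt, hpf]
    · by_cases h : p < 2 * n - q
      · rw [psiR, if_pos h]
        rw [E1 hv hq _ h] at hpos
        omega
      · rw [psiR, if_neg h]
        rw [E2 hv hcnt hq _ (by omega) hplt] at hpos
        omega
  · intro p hp
    rw [Finset.mem_filter, Finset.mem_range] at hp
    exact psiR_phiR hq' (by omega)
  · intro p hp
    rw [Finset.mem_filter, Finset.mem_range] at hp
    exact phiR_psiR hq' (by omega)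

include hcnt hq hqf in
lemma lemRI (j : ℕ) (hj : j < 2 * n + 1) :
    rank (rotW v q ++ [false]) (phiR n q j) = rank v j := by
  have hq' : q ≤ 2 * n := by rw [hv] at hq; omega
  rw [rank, rank, hv, rotV_length hv hq]
  symm
  apply Finset.card_bij' (fun p _ => phiR n q p) (fun p _ => psiR n q p)
  · intro p hp
    rw [Finset.mem_filter, Finset.mem_range] at hp ⊢
    obtain ⟨hplt, hpf, hgt⟩ := hp
    have hphilt : phiR n q p < 2 * n + 1 := by
      simp only [phiR]; split_ifs <;> omega
    refine ⟨hphilt, ?_, ?_⟩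
    · rw [GV2 hv hq hqf _ hplt, hpf]
    · rw [EV2 hv hcnt hq hqf _ hplt, EV2 hv hcnt hq hqf _ hj]
      by_cases h1 : q < p <;> by_cases h2 : q < j <;>
        simp only [phiR, h1, h2, if_true, if_false] at hgt ⊢ <;> omega
  · intro p hp
    rw [Finset.mem_filter, Finset.mem_range] at hp ⊢
    obtain ⟨hplt, hpf, hgt⟩ := hp
    have hpsilt : psiR n q p < 2 * n + 1 := by
      simp only [psiR]; split_ifs <;> omega
    have hphipsi : phiR n q (psiR n q p) = p := phiR_psiR hq' hplt
    have hEp := EV2 hv hcnt hq hqf (psiR n q p) hpsilt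
    rw [hphipsi] at hEp
    have hGp := GV2 hv hq hqf (psiR n q p) hpsilt
    rw [hphipsi] at hGp
    have hEj := EV2 hv hcnt hq hqf j hj
    refine ⟨hpsilt, by rw [← hGp, hpf], ?_⟩
    rw [hEp, hEj] at hgt
    by_cases h1 : p < 2 * n - q <;> by_cases h2 : q < j <;>
      simp only [psiR, phiR, h1, h2, if_true, if_false] at hgt ⊢ <;>
      split_ifs at hgt ⊢ <;> omega
  · intro p hp
    rw [Finset.mem_filter, Finset.mem_range] at hp
    exact psiR_phiR hq' (by omega)
  · intro p hp
    rw [Finset.mem_filter, Finset.mem_range] at hp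
    exact phiR_psiR hq' (by omega)


-- cardinality of the set of false positions
omit hv in
lemma card_Qv (u : List Bool) :
    ((Finset.range u.length).filter (fun p => u.getD p true = false)).card
      = u.count false := by
  have h := F3F false u (le_refl u.length)
  rw [Hc_length false u le_rfl] at h
  simpa using h

include hv hcnt hq hqf in
lemma rankLeN : rank v q ≤ n := by
  have hcf : v.count false = n + 1 := count_false_v hv hcnt
  have hsub : (Finset.range v.length).filter (fun p => v.getD p true = false ∧
      (Ew v q < Ew v p ∨ (Ew v p = Ew v q ∧ q < p)))
      ⊆ ((Finset.range v.length).filter (fun p => v.getD p true = false)).erase q := by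
    intro r hr
    rw [Finset.mem_filter, Finset.mem_range] at hr
    rw [Finset.mem_erase, Finset.mem_filter, Finset.mem_range]
    refine ⟨?_, hr.1, hr.2.1⟩
    rintro rfl
    rcases hr.2.2 with h | ⟨h1, h2⟩ <;> omega
  have := Finset.card_le_card hsub
  rw [Finset.card_erase_of_mem (by rw [Finset.mem_filter, Finset.mem_range]; exact ⟨hq, hqf⟩),
    card_Qv, hcf] at this
  rw [rank]
  omega

include hv in
lemma rank_lt_of_gt2 {p : ℕ} (hp : p < v.length) (hpf : v.getD p true = false)
    (hgt : Ew v q < Ew v p ∨ (Ew v p = Ew v q ∧ q < p)) : rank v p < rank v q := by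
  apply Finset.card_lt_card
  rw [Finset.ssubset_iff_of_subset]
  · refine ⟨p, ?_, ?_⟩
    · rw [Finset.mem_filter, Finset.mem_range]
      exact ⟨hp, hpf, hgt⟩
    · rw [Finset.mem_filter, Finset.mem_range]
      push_neg
      intro _ _
      exact ⟨le_refl _, fun _ => le_refl _⟩
  · intro r hr
    rw [Finset.mem_filter, Finset.mem_range] at hr ⊢
    refine ⟨hr.1, hr.2.1, ?_⟩
    rcases hr.2.2 with h | ⟨h1, h2⟩ <;> rcases hgt with h' | ⟨h1', h2'⟩ <;>
      [left; left; left; right] <;> first | omega | exact ⟨by omega, by omega⟩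
  done

include hv hcnt in
lemma rank_bij {L : ℕ} (hL : L ≤ n) :
    ∃! r, (r < v.length ∧ v.getD r true = false) ∧ rank v r = L := by
  classical
  set Qv := (Finset.range v.length).filter (fun p => v.getD p true = false) with hQv
  have hQmem : ∀ r, r ∈ Qv ↔ r < v.length ∧ v.getD r true = false := by
    intro r; rw [hQv, Finset.mem_filter, Finset.mem_range]
  have hQcard : Qv.card = n + 1 := by rw [hQv, card_Qv, count_false_v hv hcnt]
  have hinj : Set.InjOn (rank v) Qv := by
    intro a ha b hb hab
    rw [Finset.mem_coe, hQmem] at ha hb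
    by_contra hne
    have : (Ew v b < Ew v a ∨ (Ew v a = Ew v b ∧ b < a)) ∨
        (Ew v a < Ew v b ∨ (Ew v b = Ew v a ∧ a < b)) := by omega
    rcases this with h | h
    · have := rank_lt_of_gt2 hv ha.1 ha.2 h; omega
    · have := rank_lt_of_gt2 hv hb.1 hb.2 h; omega
  have himg : Qv.image (rank v) = Finset.range (n + 1) := by
    apply Finset.eq_of_subset_of_card_le
    · intro m hm
      rw [Finset.mem_image] at hm
      obtain ⟨r, hr, hrm⟩ := hm
      rw [hQmem] at hr
      rw [Finset.mem_range, ← hrm]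
      have := rankLeN hv hcnt hr.1 hr.2
      omega
    · rw [Finset.card_range, Finset.card_image_of_injOn hinj, hQcard]
  have hLmem : L ∈ Qv.image (rank v) := by rw [himg, Finset.mem_range]; omega
  rw [Finset.mem_image] at hLmem
  obtain ⟨r, hr, hrL⟩ := hLmem
  refine ⟨r, ⟨(hQmem r).mp hr, hrL⟩, ?_⟩
  intro r' ⟨hr', hrL'⟩
  exact hinj (by rw [Finset.mem_coe, hQmem]; exact hr') (Finset.mem_coe.mpr hr) (by rw [hrL, hrL'])


end core

open Classical in
noncomputable def pick (v : List Bool) (L : ℕ) : ℕ :=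
  if h : ∃! r, (r < v.length ∧ v.getD r true = false) ∧ rank v r = L then
    h.exists.choose else 0

lemma pick_spec {v : List Bool} {L : ℕ}
    (h : ∃! r, (r < v.length ∧ v.getD r true = false) ∧ rank v r = L) :
    (pick v L < v.length ∧ v.getD (pick v L) true = false) ∧ rank v (pick v L) = L := by
  classical
  rw [pick]
  rw [dif_pos h]
  exact h.exists.choose_spec

lemma pick_eq {v : List Bool} {L : ℕ}
    (h : ∃! r, (r < v.length ∧ v.getD r true = false) ∧ rank v r = L)
    {r : ℕ} (hr : (r < v.length ∧ v.getD r true = false) ∧ rank v r = L) :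
    r = pick v L :=
  h.unique hr (pick_spec h)

noncomputable def rot (w : List Bool) (L : ℕ) : List Bool :=
  rotW (w ++ [false]) (pick (w ++ [false]) L)

section main
variable {n L : ℕ} {w : List Bool}
  (hw : w.length = 2 * n) (hcw : w.count true = n)

include hw hcw

lemma appF_length : (w ++ [false]).length = 2 * n + 1 := by
  rw [List.length_append, hw]; rfl

lemma appF_count : (w ++ [false]).count true = n := by
  rw [List.count_append, hcw]; rfl

lemma appF_last : (w ++ [false]).getD (2 * n) true = false := by
  rw [List.getD_append_right _ _ _ _ (by omega)]
  rw [show 2 * n - w.length = 0 by omega]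
  rfl

lemma stat_le : stat w ≤ n := by
  have hcf : w.count false = n := by have := count_true_add_count_false w; omega
  have : stat w ≤ ((Finset.range w.length).filter
      (fun p => w.getD p true = false)).card := by
    apply Finset.card_le_card
    intro r hr
    rw [Finset.mem_filter] at hr ⊢
    exact ⟨hr.1, hr.2.1⟩
  rw [card_Qv, hcf] at this
  exact this

lemma rank_last : rank (w ++ [false]) (2 * n) = stat w := by
  have hv := appF_length hw hcw
  have hcnt := appF_count hw hcw
  have hq : 2 * n < (w ++ [false]).length := by omega
  have hqf := appF_last hw hcw
  have hrot : rotW (w ++ [false]) (2 * n) = w := by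
    rw [rotW]
    have h1 : (w ++ [false]).drop (2 * n + 1) = [] := by
      apply List.drop_eq_nil_of_le
      omega
    have h2 : (w ++ [false]).take (2 * n) = w := by
      rw [← hw]
      exact (List.take_left (l₁ := w) (l₂ := [false]))
    rw [h1, h2, List.nil_append]
  have hB := lemB hv hcnt hq hqf
  rw [hrot] at hB
  exact hB.symm

lemma rot_spec (hL : L ≤ n) :
    (rot w L).length = 2 * n ∧ (rot w L).count true = n ∧ stat (rot w L) = L := by
  have hv := appF_length hw hcw
  have hcnt := appF_count hw hcw
  have hex := rank_bij hv hcnt hL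
  obtain ⟨⟨hq, hqf⟩, hrank⟩ := pick_spec hex
  refine ⟨rotW_length hv hq, ?_, ?_⟩
  · have := count_rotW hv hq hqf true
    simp only [if_neg (by simp : ¬ (true = false))] at this
    show (rotW (w ++ [false]) (pick (w ++ [false]) L)).count true = n
    omega
  · rw [rot, lemB hv hcnt hq hqf, hrank]

lemma rot_rot (hL : L ≤ n) : rot (rot w L) (stat w) = w := by
  have hv := appF_length hw hcw
  have hcnt := appF_count hw hcw
  have hex := rank_bij hv hcnt hL
  obtain ⟨⟨hq, hqf⟩, hrank⟩ := pick_spec hex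
  set v := w ++ [false] with hvdef
  set q := pick v L with hqdef
  obtain ⟨hlen', hcnt', hstat'⟩ := rot_spec hw hcw hL
  have hv' : (rot w L ++ [false]).length = 2 * n + 1 := appF_length hlen' hcnt'
  have hcv' : (rot w L ++ [false]).count true = n := appF_count hlen' hcnt'
  have hstatle := stat_le hw hcw
  have hex2 := rank_bij hv' hcv' hstatle
  have hq2n : q ≤ 2 * n := by rw [hv] at hq; omega
  -- the candidate
  have hcand : ((phiR n q (2 * n) < (rot w L ++ [false]).length ∧
      (rot w L ++ [false]).getD (phiR n q (2 * n)) true = false) ∧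
      rank (rot w L ++ [false]) (phiR n q (2 * n)) = stat w) := by
    have h1 : phiR n q (2 * n) < 2 * n + 1 := by
      rw [phiR]; split_ifs <;> omega
    refine ⟨⟨by omega, ?_⟩, ?_⟩
    · show (rotW v q ++ [false]).getD _ true = false
      rw [GV2 hv hq hqf (2 * n) (by omega)]
      exact appF_last hw hcw
    · show rank (rotW v q ++ [false]) _ = _
      rw [lemRI hv hcnt hq hqf (2 * n) (by omega)]
      exact rank_last hw hcw
  have hpick2 : pick (rot w L ++ [false]) (stat w) = phiR n q (2 * n) :=
    (pick_eq hex2 hcand).symm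
  rw [rot, hpick2]
  -- now show rotW (rot w L ++ [false]) (phiR n q (2*n)) = w
  by_cases hcase : q < 2 * n
  · have hphi : phiR n q (2 * n) = 2 * n - q - 1 := by rw [phiR, if_pos hcase]
    rw [hphi]
    have hy : (v.drop (q + 1)).length = 2 * n - q := by
      rw [List.length_drop, hv]; omega
    have hx : (v.take q).length = q := by rw [List.length_take, hv]; omega
    have hassoc : rot w L ++ [false] = v.drop (q + 1) ++ (v.take q ++ [false]) := by
      rw [rot, ← hqdef, rotW, List.append_assoc]
    rw [rotW, hassoc]
    have hdrop : (v.drop (q + 1) ++ (v.take q ++ [false])).drop (2 * n - q - 1 + 1)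
        = v.take q ++ [false] := by
      rw [show 2 * n - q - 1 + 1 = 2 * n - q by omega, ← hy]
      exact List.drop_left
    have htake : (v.drop (q + 1) ++ (v.take q ++ [false])).take (2 * n - q - 1)
        = (v.drop (q + 1)).take (2 * n - q - 1) := by
      rw [List.take_append, hy,
        show 2 * n - q - 1 - (2 * n - q) = 0 by omega, List.take_zero, List.append_nil]
    rw [hdrop, htake]
    have hvq : v[q]'(by omega) = false := by
      have := List.getD_eq_getElem v true hq
      rw [hqf] at this
      exact this.symm
    have hsplit : v = v.take q ++ [false] ++ v.drop (q + 1) := by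
      conv_lhs => rw [← List.take_append_drop q v]
      rw [List.drop_eq_getElem_cons hq, hvq, List.append_assoc]
      rfl
    have hwtake : w = v.take (2 * n) := by
      rw [hvdef, ← hw, List.take_left]
    have hxf : (v.take q ++ [false]).length ≤ 2 * n := by
      rw [List.length_append, hx, List.length_singleton]; omega
    have htake2n : List.take (2 * n) (v.take q ++ [false] ++ v.drop (q + 1))
        = (v.take q ++ [false]) ++ List.take (2 * n - (q + 1)) (v.drop (q + 1)) := by
      rw [List.take_append, List.take_of_length_le hxf,
        List.length_append, hx, List.length_singleton]
    rw [hwtake]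
    conv_rhs => rw [hsplit]
    rw [htake2n, show 2 * n - (q + 1) = 2 * n - q - 1 by omega]
  · have hqeq : q = 2 * n := by omega
    have hphi : phiR n q (2 * n) = 2 * n := by rw [phiR, if_neg hcase]; omega
    have hrotid : rot w L = w := by
      rw [rot, ← hqdef, rotW, hqeq]
      have h1 : v.drop (2 * n + 1) = [] := List.drop_eq_nil_of_le (by omega)
      have h2 : v.take (2 * n) = w := by rw [hvdef, ← hw]; exact (List.take_left (l₁ := w) (l₂ := [false]))
      rw [h1, h2, List.nil_append]
    rw [hphi, hrotid, rotW]
    have h1 : (w ++ [false]).drop (2 * n + 1) = [] := List.drop_eq_nil_of_le (by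
      rw [List.length_append, hw]; simp)
    have h2 : (w ++ [false]).take (2 * n) = w := by rw [← hw]; exact (List.take_left (l₁ := w) (l₂ := [false]))
    rw [h1, h2, List.nil_append]

end main

-- bridge: Fin-univ filter vs range filter
lemma card_univ_fin_filter (m : ℕ) (p : ℕ → Prop) [DecidablePred p] :
    ((Finset.univ : Finset (Fin m)).filter (fun i => p i.1)).card
      = ((Finset.range m).filter p).card := by
  apply Finset.card_bij (fun i _ => i.1)
  · intro a ha
    rw [Finset.mem_filter] at ha
    rw [Finset.mem_filter, Finset.mem_range]
    exact ⟨a.2, ha.2⟩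
  · intro a _ b _ h
    exact Fin.ext h
  · intro b hb
    rw [Finset.mem_filter, Finset.mem_range] at hb
    exact ⟨⟨b, hb.1⟩, by rw [Finset.mem_filter]; exact ⟨Finset.mem_univ _, hb.2⟩, rfl⟩

lemma count_eq_card_fin (m : ℕ) (x : List Bool) (hx : x.length = m) :
    ((Finset.univ : Finset (Fin m)).filter (fun i => x.getD i.1 false = true)).card
      = x.count true := by
  rw [card_univ_fin_filter m (fun j => x.getD j false = true)]
  have h := F3F true x (t := m) (by omega)
  rw [Hc_length true x (by omega)] at h
  simpa using h

def vecSubEquiv (m : ℕ) (P : List Bool → Prop) :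
    {w : List Bool // w.length = m ∧ P w} ≃ {x : List.Vector Bool m // P x.1} where
  toFun w := ⟨⟨w.1, w.2.1⟩, w.2.2⟩
  invFun x := ⟨x.1.1, x.1.2, x.2⟩
  left_inv w := rfl
  right_inv x := rfl

noncomputable instance (m k : ℕ) : Fintype {x : List.Vector Bool m // x.1.count true = k} :=
  Subtype.fintype _

lemma vec_get_eq_getD {m : ℕ} (x : List.Vector Bool m) (i : Fin m) :
    x.get i = x.1.getD i.1 false := by
  rcases x with ⟨l, hl⟩
  show List.Vector.get ⟨l, hl⟩ i = l.getD i.1 false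
  rw [List.getD_eq_getElem _ _ (by omega)]
  rfl

lemma card_get_filter_eq_count {m : ℕ} (x : List.Vector Bool m) :
    (Finset.univ.filter (fun i : Fin m => x.get i = true)).card = x.1.count true := by
  rw [Finset.filter_congr (fun i _ => by rw [vec_get_eq_getD] :
    ∀ i ∈ Finset.univ, (x.get i = true) ↔ (x.1.getD i.1 false = true))]
  exact count_eq_card_fin m x.1 x.2

lemma card_vec_count (m k : ℕ) :
    Fintype.card {x : List.Vector Bool m // x.1.count true = k} = m.choose k := by
  classical
  have e : {x : List.Vector Bool m // x.1.count true = k}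
      ≃ {s : Finset (Fin m) // s.card = k} := by
    refine ⟨fun x => ⟨Finset.univ.filter (fun i : Fin m => x.1.get i = true), ?_⟩,
      fun s => ⟨List.Vector.ofFn (fun i : Fin m => decide (i ∈ s.1)), ?_⟩, ?_, ?_⟩
    · rw [card_get_filter_eq_count, x.2]
    · rw [← card_get_filter_eq_count]
      rw [Finset.filter_congr (fun i _ => by rw [List.Vector.get_ofFn, decide_eq_true_eq] :
        ∀ i ∈ Finset.univ, ((List.Vector.ofFn (fun j : Fin m => decide (j ∈ s.1))).get i
          = true) ↔ i ∈ s.1)]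
      rw [Finset.filter_univ_mem]
      exact s.2
    · rintro ⟨x, hx⟩
      apply Subtype.ext
      apply List.Vector.ext
      intro i
      show List.Vector.get _ i = x.get i
      rw [List.Vector.get_ofFn]
      cases hb : x.get i <;> simp [hb]
    · rintro ⟨s, hs⟩
      apply Subtype.ext
      show Finset.univ.filter _ = s
      rw [Finset.filter_congr (fun i _ => by rw [List.Vector.get_ofFn, decide_eq_true_eq] :
        ∀ i ∈ Finset.univ, ((List.Vector.ofFn (fun j : Fin m => decide (j ∈ s))).get i
          = true) ↔ i ∈ s)]
      rw [Finset.filter_univ_mem]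
  rw [Fintype.card_congr e, Fintype.card_finset_len, Fintype.card_fin]

noncomputable instance (m k L : ℕ) :
    Fintype {x : List.Vector Bool m // x.1.count true = k ∧ stat x.1 = L} :=
  Subtype.fintype _

lemma sum_fibers (n : ℕ) :
    ∑ M ∈ Finset.range (n + 1),
      Fintype.card {x : List.Vector Bool (2*n) // x.1.count true = n ∧ stat x.1 = M}
      = Fintype.card {x : List.Vector Bool (2*n) // x.1.count true = n} := by
  classical
  rw [Fintype.card_subtype]
  rw [Finset.card_eq_sum_card_fiberwise (f := fun x => stat x.1)
    (t := Finset.range (n + 1)) (fun x hx => by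
      rw [Finset.mem_coe, Finset.mem_filter] at hx
      rw [Finset.mem_coe, Finset.mem_range]
      show stat x.1 < n + 1
      have := stat_le x.2 hx.2
      omega)]
  apply Finset.sum_congr rfl
  intro M hM
  rw [Fintype.card_subtype, Finset.filter_filter]

lemma pre_final (n L : ℕ) (hL : L ≤ n) :
    (n + 1) * Nat.card {w : List Bool // w.length = 2*n ∧ w.count true = n ∧ stat w = L}
      = (2 * n).choose n := by
  classical
  have e1 : ∀ M, M ≤ n →
      {w : List Bool // w.length = 2*n ∧ w.count true = n ∧ stat w = M}
      ≃ {w : List Bool // w.length = 2*n ∧ w.count true = n ∧ stat w = L} := by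
    intro M hM
    refine ⟨fun w => ⟨rot w.1 L, (rot_spec w.2.1 w.2.2.1 hL).1,
        (rot_spec w.2.1 w.2.2.1 hL).2.1, (rot_spec w.2.1 w.2.2.1 hL).2.2⟩,
      fun w => ⟨rot w.1 M, (rot_spec w.2.1 w.2.2.1 hM).1,
        (rot_spec w.2.1 w.2.2.1 hM).2.1, (rot_spec w.2.1 w.2.2.1 hM).2.2⟩, ?_, ?_⟩
    · rintro ⟨w, h1, h2, h3⟩
      apply Subtype.ext
      show rot (rot w L) M = w
      rw [← h3]
      exact rot_rot h1 h2 hL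
    · rintro ⟨w, h1, h2, h3⟩
      apply Subtype.ext
      show rot (rot w M) L = w
      rw [← h3]
      exact rot_rot h1 h2 hM
  have hvec : ∀ M, Nat.card {w : List Bool // w.length = 2*n ∧ w.count true = n ∧ stat w = M}
      = Fintype.card {x : List.Vector Bool (2*n) // x.1.count true = n ∧ stat x.1 = M} := by
    intro M
    rw [Nat.card_congr (vecSubEquiv (2*n) (fun w => w.count true = n ∧ stat w = M)),
      Nat.card_eq_fintype_card]
  have h2 : (2 * n).choose n
      = ∑ M ∈ Finset.range (n + 1),
        Nat.card {w : List Bool // w.length = 2*n ∧ w.count true = n ∧ stat w = M} := by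
    rw [← card_vec_count (2*n) n, ← sum_fibers n]
    apply Finset.sum_congr rfl
    intro M _
    exact (hvec M).symm
  rw [h2]
  rw [Finset.sum_congr rfl (fun M hM => Nat.card_congr (e1 M (by
    rw [Finset.mem_range] at hM; omega)))]
  rw [Finset.sum_const, Finset.card_range, smul_eq_mul]

theorem chung_feller (n L : ℕ) (hL : L ≤ n) :
    (Nat.card {w : List Bool // w.length = 2 * n ∧ w.count true = n ∧
        ((Finset.range n).filter (fun i =>
          (occPositions w true).getD i 0 < (occPositions w false).getD i 0)).card = L} : ℚ)
      = 1 / (n + 1) * Nat.choose (2 * n) n := by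
  have key := pre_final n L hL
  have hcardeq : Nat.card {w : List Bool // w.length = 2 * n ∧ w.count true = n ∧
        ((Finset.range n).filter (fun i =>
          (occPositions w true).getD i 0 < (occPositions w false).getD i 0)).card = L}
      = Nat.card {w : List Bool // w.length = 2 * n ∧ w.count true = n ∧ stat w = L} := by
    apply Nat.card_congr
    apply Equiv.subtypeEquivRight
    intro w
    constructor
    · rintro ⟨h1, h2, h3⟩
      exact ⟨h1, h2, by rw [← stat_eq h1 h2]; exact h3⟩
    · rintro ⟨h1, h2, h3⟩
      exact ⟨h1, h2, by rw [stat_eq h1 h2]; exact h3⟩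
  rw [hcardeq]
  have hcast : ((n : ℚ) + 1) * (Nat.card {w : List Bool // w.length = 2 * n ∧
      w.count true = n ∧ stat w = L} : ℚ) = ((2 * n).choose n : ℚ) := by
    exact_mod_cast key
  have hne : ((n : ℚ) + 1) ≠ 0 := by positivity
  field_simp
  linarith [hcast]
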